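/- Let A be a nonzero square real matrix on F ⊕ C and let P = [[W],[I]]. Suppose P satisfies the weak approximation property with respect to AᵀA with constant C_P, i.e., for every vector v on F ⊕ C there exists a coarse vector w_c with ‖v − P·w_c‖² ≤ (C_P/‖AᵀA‖)·‖A·v‖². Then for every vector v = (v_f, v_c) on F ⊕ C, ‖v_f − W·v_c‖ ≤ C_W·‖A·v‖, where C_W = sqrt(C_P·(1 + ‖W‖²)/‖AᵀA‖). -/

import Mathlib

open Matrix
open scoped Matrix.Norms.L2Operator

/-- The Euclidean (ℓ²) norm of a finitely-supported real vector. -/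
noncomputable def euclNorm {ι : Type*} [Fintype ι] (v : ι → ℝ) : ℝ :=
  ‖(WithLp.equiv 2 (ι → ℝ)).symm v‖


lemma euclNorm_nonneg {ι : Type*} [Fintype ι] (v : ι → ℝ) : 0 ≤ euclNorm v :=
  norm_nonneg _

lemma euclNorm_sq {ι : Type*} [Fintype ι] (v : ι → ℝ) :
    euclNorm v ^ 2 = ∑ i, v i ^ 2 := by
  rw [euclNorm, EuclideanSpace.norm_eq, Real.sq_sqrt (by positivity)]
  simp [sq_abs]

lemma euclNorm_triangle {ι : Type*} [Fintype ι] (v w : ι → ℝ) :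
    euclNorm (v + w) ≤ euclNorm v + euclNorm w := by
  simpa [euclNorm] using norm_add_le ((WithLp.equiv 2 (ι → ℝ)).symm v) ((WithLp.equiv 2 (ι → ℝ)).symm w)

lemma euclNorm_neg {ι : Type*} [Fintype ι] (v : ι → ℝ) :
    euclNorm (-v) = euclNorm v := by
  simpa [euclNorm] using norm_neg ((WithLp.equiv 2 (ι → ℝ)).symm v)

lemma euclNorm_mulVec_le {m n : Type*} [Fintype m] [Fintype n] [DecidableEq m] [DecidableEq n] (M : Matrix m n ℝ)
    (x : n → ℝ) : euclNorm (M *ᵥ x) ≤ ‖M‖ * euclNorm x :=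
  M.l2_opNorm_mulVec ((WithLp.equiv 2 (n → ℝ)).symm x)

/-- If `P = [[W],[I]]` satisfies the weak approximation property with respect to `AᵀA`
with constant `C_P`, then `‖v_f − W·v_c‖ ≤ C_W·‖A·v‖` for every `v = (v_f, v_c)`, where
`C_W = sqrt(C_P·(1 + ‖W‖²)/‖AᵀA‖)`. -/
theorem wap_implies_F_point_interpolation_bound
    {F C : Type*} [Fintype F] [Fintype C] [DecidableEq F] [DecidableEq C]
    (A : Matrix (F ⊕ C) (F ⊕ C) ℝ) (hA0 : A ≠ 0)
    (W : Matrix F C ℝ)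
    (P : Matrix (F ⊕ C) C ℝ) (hP : P = fromRows W 1)
    (CP : ℝ)
    (hWAP : ∀ v : (F ⊕ C) → ℝ, ∃ wc : C → ℝ,
      euclNorm (v - P *ᵥ wc) ^ 2 ≤ (CP / ‖Aᵀ * A‖) * euclNorm (A *ᵥ v) ^ 2)
    (CW : ℝ) (hCW : CW = Real.sqrt (CP * (1 + ‖W‖ ^ 2) / ‖Aᵀ * A‖)) :
    ∀ v : (F ⊕ C) → ℝ,
      euclNorm ((fun i => v (Sum.inl i)) - W *ᵥ (fun j => v (Sum.inr j))) ≤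
        CW * euclNorm (A *ᵥ v) := by
  intro v
  obtain ⟨wc, hwc⟩ := hWAP v
  set u : (F ⊕ C) → ℝ := v - P *ᵥ wc with hu
  set a : ℝ := euclNorm (fun i => u (Sum.inl i)) with ha
  set b : ℝ := euclNorm (fun j => u (Sum.inr j)) with hb
  set q : ℝ := euclNorm (A *ᵥ v) with hq
  have hq0 : 0 ≤ q := euclNorm_nonneg _
  have ha0 : 0 ≤ a := euclNorm_nonneg _
  have hb0 : 0 ≤ b := euclNorm_nonneg _
  have hW0 : (0:ℝ) ≤ ‖W‖ := norm_nonneg _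
  have hCW0 : 0 ≤ CW := hCW ▸ Real.sqrt_nonneg _
  -- split the norm of u
  have hsplit : euclNorm u ^ 2 = a ^ 2 + b ^ 2 := by
    rw [euclNorm_sq, ha, hb, euclNorm_sq, euclNorm_sq, Fintype.sum_sum_type]
  -- decompose the target vector
  have hPv : ∀ x, (P *ᵥ wc) x = Sum.elim (W *ᵥ wc) wc x := by
    intro x
    rw [hP, Matrix.fromRows_mulVec, Matrix.one_mulVec]
  have hdec : ((fun i => v (Sum.inl i)) - W *ᵥ (fun j => v (Sum.inr j)))
      = (fun i => u (Sum.inl i)) + W *ᵥ (fun j => -u (Sum.inr j)) := by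
    funext i
    have h1 : u (Sum.inl i) = v (Sum.inl i) - (W *ᵥ wc) i := by
      simp [hu, hPv (Sum.inl i)]
    have h2 : (fun j => -u (Sum.inr j)) = fun j => wc j - v (Sum.inr j) := by
      funext j
      simp [hu, hPv (Sum.inr j)]
    rw [h2]
    simp only [Pi.sub_apply, Pi.add_apply, h1, Matrix.mulVec, dotProduct, mul_sub]
    rw [Finset.sum_sub_distrib]
    ring
  have hle : euclNorm ((fun i => v (Sum.inl i)) - W *ᵥ (fun j => v (Sum.inr j)))
      ≤ a + ‖W‖ * b := by
    rw [hdec]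
    refine (euclNorm_triangle _ _).trans ?_
    gcongr
    refine (euclNorm_mulVec_le W _).trans ?_
    gcongr
    have : (fun j => -u (Sum.inr j)) = -(fun j => u (Sum.inr j)) := rfl
    rw [this, euclNorm_neg]
  set L : ℝ := euclNorm ((fun i => v (Sum.inl i)) - W *ᵥ (fun j => v (Sum.inr j))) with hL
  have hL0 : 0 ≤ L := euclNorm_nonneg _
  have hab : a ^ 2 + b ^ 2 ≤ (CP / ‖Aᵀ * A‖) * q ^ 2 := by rw [← hsplit]; exact hwc
  rcases le_or_gt 0 (CP / ‖Aᵀ * A‖) with hc | hc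
  · -- main case
    have hCWsq : CW ^ 2 = (CP / ‖Aᵀ * A‖) * (1 + ‖W‖ ^ 2) := by
      have hnn : 0 ≤ CP * (1 + ‖W‖ ^ 2) / ‖Aᵀ * A‖ := by
        rw [mul_comm CP, mul_div_assoc]
        positivity
      rw [hCW, Real.sq_sqrt hnn, mul_comm CP, mul_div_assoc, mul_comm]
    have hsq : L ^ 2 ≤ (CW * q) ^ 2 := by
      have h1 : L ^ 2 ≤ (a + ‖W‖ * b) ^ 2 := by nlinarith
      have h2 : (a + ‖W‖ * b) ^ 2 ≤ (1 + ‖W‖ ^ 2) * (a ^ 2 + b ^ 2) := by nlinarith [sq_nonneg (‖W‖ * a - b)]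
      have h3 : (1 + ‖W‖ ^ 2) * (a ^ 2 + b ^ 2) ≤ (1 + ‖W‖ ^ 2) * ((CP / ‖Aᵀ * A‖) * q ^ 2) := by
        have : (0:ℝ) ≤ 1 + ‖W‖ ^ 2 := by positivity
        exact mul_le_mul_of_nonneg_left hab this
      calc L ^ 2 ≤ (a + ‖W‖ * b) ^ 2 := h1
        _ ≤ (1 + ‖W‖ ^ 2) * (a ^ 2 + b ^ 2) := h2
        _ ≤ (1 + ‖W‖ ^ 2) * ((CP / ‖Aᵀ * A‖) * q ^ 2) := h3
        _ = (CW * q) ^ 2 := by rw [mul_pow, hCWsq]; ring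
    have := Real.sqrt_le_sqrt hsq
    rwa [Real.sqrt_sq hL0, Real.sqrt_sq (by positivity)] at this
  · -- degenerate case: CP/‖AᵀA‖ < 0 forces everything to vanish
    have h0 : 0 ≤ (CP / ‖Aᵀ * A‖) * q ^ 2 := le_trans (by positivity) hab
    have hcq : (CP / ‖Aᵀ * A‖) * q ^ 2 = 0 :=
      le_antisymm (mul_nonpos_of_nonpos_of_nonneg hc.le (sq_nonneg q)) h0
    have hqz : q = 0 := sq_eq_zero_iff.mp ((mul_eq_zero.mp hcq).resolve_left hc.ne)
    have habz : a ^ 2 + b ^ 2 ≤ 0 := by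
      calc a ^ 2 + b ^ 2 ≤ (CP / ‖Aᵀ * A‖) * q ^ 2 := hab
        _ = 0 := by rw [hqz]; ring
    have haz : a = 0 := sq_eq_zero_iff.mp
      (le_antisymm (by linarith [sq_nonneg b]) (sq_nonneg a))
    have hbz : b = 0 := sq_eq_zero_iff.mp
      (le_antisymm (by linarith [sq_nonneg a]) (sq_nonneg b))
    calc L ≤ a + ‖W‖ * b := hle
      _ = 0 := by rw [haz, hbz]; ring
      _ ≤ CW * q := by rw [hqz]; simp
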